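/- Fix λ > 0 and θ ∈ ℝ. Define M₁ = diag(λ^{1/2}, λ^{-1/2}), M₂ = M₁^{-1} (M₁ U_θ M₁² U_θᵀ M₁)^{1/2} M₁^{-1}, and M₃ = (U_θ M₁² U_θᵀ)^{-1/2}. Then M₁, M₂, M₃ are symmetric positive definite 2×2 matrices and the product M₃ M₂ M₁ is an orthogonal matrix with determinant 1 (hence a rotation matrix). -/

import Mathlib

open Matrix
open scoped Classical

/-- The 2×2 rotation matrix by angle `θ`. -/
noncomputable def rotMat (θ : ℝ) : Matrix (Fin 2) (Fin 2) ℝ :=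
  !![Real.cos θ, Real.sin θ; -Real.sin θ, Real.cos θ]

/-- The positive semidefinite square root of a matrix, extended by `0` to
matrices that are not positive semidefinite.  For a positive definite matrix
`S`, `psqrt S` is the unique positive definite square root `S^{1/2}` of `S`. -/
noncomputable def psqrt {n : ℕ} (S : Matrix (Fin n) (Fin n) ℝ) :
    Matrix (Fin n) (Fin n) ℝ :=
  if h : S.PosSemidef then
    (h.1.eigenvectorUnitary : Matrix (Fin n) (Fin n) ℝ) *
      diagonal (Real.sqrt ∘ h.1.eigenvalues) *
      (star h.1.eigenvectorUnitary : Matrix (Fin n) (Fin n) ℝ)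
  else 0

noncomputable def Matrix.PosSemidef.sqrt {n : ℕ} {S : Matrix (Fin n) (Fin n) ℝ}
    (h : S.PosSemidef) : Matrix (Fin n) (Fin n) ℝ :=
  (h.1.eigenvectorUnitary : Matrix (Fin n) (Fin n) ℝ) *
    diagonal (Real.sqrt ∘ h.1.eigenvalues) *
    (star h.1.eigenvectorUnitary : Matrix (Fin n) (Fin n) ℝ)

lemma Matrix.PosSemidef.sqrt_mul_self {n : ℕ} {S : Matrix (Fin n) (Fin n) ℝ}
    (h : S.PosSemidef) : h.sqrt * h.sqrt = S := by
  have hspec := h.1.spectral_theorem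
  rw [Unitary.conjStarAlgAut_apply] at hspec
  conv_rhs => rw [hspec]
  have hU : (star h.1.eigenvectorUnitary : Matrix (Fin n) (Fin n) ℝ) *
      (h.1.eigenvectorUnitary : Matrix (Fin n) (Fin n) ℝ) = 1 := Unitary.coe_star_mul_self _
  have hD : diagonal (Real.sqrt ∘ h.1.eigenvalues) * diagonal (Real.sqrt ∘ h.1.eigenvalues)
      = diagonal (RCLike.ofReal ∘ h.1.eigenvalues) := by
    rw [diagonal_mul_diagonal]
    congr 1; funext i
    simp [Real.mul_self_sqrt (h.eigenvalues_nonneg i)]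
  unfold Matrix.PosSemidef.sqrt
  calc _ = (h.1.eigenvectorUnitary : Matrix (Fin n) (Fin n) ℝ) *
        (diagonal (Real.sqrt ∘ h.1.eigenvalues) * ((star h.1.eigenvectorUnitary : Matrix (Fin n) (Fin n) ℝ) *
      (h.1.eigenvectorUnitary : Matrix (Fin n) (Fin n) ℝ)) * diagonal (Real.sqrt ∘ h.1.eigenvalues)) *
        (star h.1.eigenvectorUnitary : Matrix (Fin n) (Fin n) ℝ) := by
          simp only [Matrix.mul_assoc]
    _ = _ := by rw [hU, Matrix.mul_one, hD]

lemma Matrix.PosSemidef.posSemidef_sqrt {n : ℕ} {S : Matrix (Fin n) (Fin n) ℝ}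
    (h : S.PosSemidef) : h.sqrt.PosSemidef := by
  have hd : (diagonal (Real.sqrt ∘ h.1.eigenvalues)).PosSemidef :=
    PosSemidef.diagonal (fun i => Real.sqrt_nonneg _)
  have := hd.mul_mul_conjTranspose_same (h.1.eigenvectorUnitary : Matrix (Fin n) (Fin n) ℝ)
  unfold Matrix.PosSemidef.sqrt
  rwa [star_eq_conjTranspose]

/-- A positive semidefinite real matrix with invertible determinant is positive definite. -/
lemma posDef_of_posSemidef_isUnit {n : ℕ} {S : Matrix (Fin n) (Fin n) ℝ}
    (hS : S.PosSemidef) (h : IsUnit S.det) : S.PosDef := by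
  refine PosDef.of_dotProduct_mulVec_pos hS.1 fun x hx => ?_
  have hT : hS.sqrt * hS.sqrt = S := hS.sqrt_mul_self
  set T := hS.sqrt with hTdef
  have hTherm : Tᵀ = T := by
    have := hS.posSemidef_sqrt.1
    rwa [Matrix.IsHermitian, conjTranspose_eq_transpose_of_trivial] at this
  have hdet : IsUnit T.det := by
    have h2 : T.det * T.det = S.det := by rw [← det_mul, hT]
    exact isUnit_of_mul_isUnit_left (h2 ▸ h)
  have hy : T *ᵥ x ≠ 0 := by
    intro h0
    apply hx
    have := congrArg (fun v => T⁻¹ *ᵥ v) h0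
    simpa [mulVec_mulVec, nonsing_inv_mul T hdet] using this
  have : star x ⬝ᵥ S *ᵥ x = (T *ᵥ x) ⬝ᵥ (T *ᵥ x) := by
    rw [← hT, ← mulVec_mulVec, star_trivial, dotProduct_mulVec, ← mulVec_transpose, hTherm]
  rw [this]
  simpa [star_trivial] using dotProduct_star_self_pos_iff (v := T *ᵥ x) |>.mpr hy

/-- Congruence of a positive definite matrix by an invertible matrix is positive definite. -/
lemma posDef_congr' {n : ℕ} {A N : Matrix (Fin n) (Fin n) ℝ}
    (hA : A.PosDef) (hN : IsUnit N.det) : (N * A * Nᵀ).PosDef := by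
  apply posDef_of_posSemidef_isUnit
  · have := hA.posSemidef.mul_mul_conjTranspose_same N
    rwa [conjTranspose_eq_transpose_of_trivial] at this
  · rw [det_mul, det_mul, det_transpose]
    exact (hN.mul hA.det_pos.ne'.isUnit).mul hN

lemma rot_mul_rotT (θ : ℝ) : rotMat θ * (rotMat θ)ᵀ = 1 := by
  ext i j
  fin_cases i <;> fin_cases j <;>
    simp [rotMat, Matrix.mul_apply, Fin.sum_univ_two, Matrix.one_apply,
      Matrix.vecHead, Matrix.vecTail] <;>
    nlinarith [Real.sin_sq_add_cos_sq θ]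

lemma rot_det (θ : ℝ) : (rotMat θ).det = 1 := by
  simp [rotMat, Matrix.det_fin_two_of]
  nlinarith [Real.sin_sq_add_cos_sq θ]

/-- The square root of a positive definite matrix is positive definite. -/
lemma posDef_sqrt {n : ℕ} {S : Matrix (Fin n) (Fin n) ℝ} (hS : S.PosDef) :
    (hS.posSemidef.sqrt).PosDef := by
  apply posDef_of_posSemidef_isUnit hS.posSemidef.posSemidef_sqrt
  have h2 : (hS.posSemidef.sqrt).det * (hS.posSemidef.sqrt).det = S.det := by
    rw [← det_mul, hS.posSemidef.sqrt_mul_self]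
  exact isUnit_of_mul_isUnit_left (h2 ▸ hS.det_pos.ne'.isUnit)

/-- Fix `λ > 0` and `θ ∈ ℝ`.  With `M₁ = diag(λ^{1/2}, λ^{-1/2})`,
`M₂ = M₁⁻¹ (M₁ U_θ M₁² U_θᵀ M₁)^{1/2} M₁⁻¹` and `M₃ = (U_θ M₁² U_θᵀ)^{-1/2}`,
the matrices `M₁, M₂, M₃` are symmetric positive definite and
`M₃ M₂ M₁` is an orthogonal matrix with determinant `1`. -/
theorem three_factor_scheme_is_rotation (l θ : ℝ) (hl : 0 < l) :
    ∀ M₁ M₂ M₃ : Matrix (Fin 2) (Fin 2) ℝ,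
      M₁ = !![Real.sqrt l, 0; 0, (Real.sqrt l)⁻¹] →
      M₂ = M₁⁻¹ * psqrt (M₁ * rotMat θ * M₁ ^ 2 * (rotMat θ)ᵀ * M₁) * M₁⁻¹ →
      M₃ = (psqrt (rotMat θ * M₁ ^ 2 * (rotMat θ)ᵀ))⁻¹ →
      M₁.PosDef ∧ M₂.PosDef ∧ M₃.PosDef ∧
      (M₃ * M₂ * M₁)ᵀ * (M₃ * M₂ * M₁) = 1 ∧
      (M₃ * M₂ * M₁) * (M₃ * M₂ * M₁)ᵀ = 1 ∧
      (M₃ * M₂ * M₁).det = 1 := by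
  intro M₁ M₂ M₃ h1 h2 h3
  set R := rotMat θ with hR
  have hRdet : IsUnit R.det := by rw [rot_det]; exact isUnit_one
  -- M₁ is positive definite
  have hsl : 0 < Real.sqrt l := Real.sqrt_pos.mpr hl
  have hM1diag : M₁ = diagonal ![Real.sqrt l, (Real.sqrt l)⁻¹] := by
    subst h1; ext i j; fin_cases i <;> fin_cases j <;> simp
  have hM1 : M₁.PosDef := by
    rw [hM1diag]
    exact Matrix.PosDef.diagonal (by
      intro i; fin_cases i <;> simp [hsl, inv_pos.mpr hsl])
  have hM1T : M₁ᵀ = M₁ := by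
    rw [← conjTranspose_eq_transpose_of_trivial]; exact hM1.1
  have hM1det : IsUnit M₁.det := hM1.det_pos.ne'.isUnit
  have hM1invT : (M₁⁻¹)ᵀ = M₁⁻¹ := by rw [transpose_nonsing_inv, hM1T]
  have hM1invdet : IsUnit (M₁⁻¹).det := hM1.inv.det_pos.ne'.isUnit
  -- M₁² is positive definite
  have hM1sq : (M₁ ^ 2).PosDef := by
    have := posDef_congr' Matrix.PosDef.one hM1det
    rwa [mul_one, hM1T, ← pow_two] at this
  -- B := R M₁² Rᵀ and S := M₁ R M₁² Rᵀ M₁ are positive definite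
  have hB : (R * M₁ ^ 2 * Rᵀ).PosDef := posDef_congr' hM1sq hRdet
  have hS : (M₁ * R * M₁ ^ 2 * Rᵀ * M₁).PosDef := by
    have := posDef_congr' hB hM1det
    rw [hM1T] at this
    simpa only [Matrix.mul_assoc] using this
  set SA := hS.posSemidef.sqrt with hSAdef
  set SB := hB.posSemidef.sqrt with hSBdef
  have hpsS : psqrt (M₁ * R * M₁ ^ 2 * Rᵀ * M₁) = SA := dif_pos hS.posSemidef
  have hpsB : psqrt (R * M₁ ^ 2 * Rᵀ) = SB := dif_pos hB.posSemidef
  have hSA : SA.PosDef := posDef_sqrt hS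
  have hSB : SB.PosDef := posDef_sqrt hB
  have hSAT : SAᵀ = SA := by
    rw [← conjTranspose_eq_transpose_of_trivial]; exact hSA.1
  have hSBinvT : (SB⁻¹)ᵀ = SB⁻¹ := by
    rw [transpose_nonsing_inv, ← conjTranspose_eq_transpose_of_trivial, hSB.1]
  have hSAdet : IsUnit SA.det := hSA.det_pos.ne'.isUnit
  -- positive definiteness of M₂ and M₃
  have hM2 : M₂.PosDef := by
    rw [h2, hpsS]
    have := posDef_congr' hSA hM1invdet
    rwa [hM1invT] at this
  have hM3 : M₃.PosDef := by
    rw [h3, hpsB]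
    exact hSB.inv
  -- the product is SB⁻¹ M₁⁻¹ SA
  have hP : M₃ * M₂ * M₁ = SB⁻¹ * (M₁⁻¹ * SA) := by
    rw [h3, h2, hpsS, hpsB]
    simp only [Matrix.mul_assoc]
    rw [nonsing_inv_mul _ hM1det, mul_one]
  have hPT : (M₃ * M₂ * M₁)ᵀ = SA * (M₁⁻¹ * SB⁻¹) := by
    rw [hP, transpose_mul, transpose_mul, hSAT, hM1invT, hSBinvT, Matrix.mul_assoc]
  -- key inverse computation
  have hBB : SB * SB = R * M₁ ^ 2 * Rᵀ := hB.posSemidef.sqrt_mul_self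
  have hAA : SA * SA = M₁ * R * M₁ ^ 2 * Rᵀ * M₁ := hS.posSemidef.sqrt_mul_self
  have hMBM : M₁ * (R * M₁ ^ 2 * Rᵀ) * M₁ = M₁ * R * M₁ ^ 2 * Rᵀ * M₁ := by
    simp only [Matrix.mul_assoc]
  have hSinv : M₁⁻¹ * (SB⁻¹ * SB⁻¹ * M₁⁻¹) = (SA * SA)⁻¹ := by
    rw [← Matrix.mul_inv_rev, hBB, hAA, ← hMBM]
    simp only [Matrix.mul_inv_rev, Matrix.mul_assoc]
  have hkey : SA * (M₁⁻¹ * SB⁻¹) * (SB⁻¹ * (M₁⁻¹ * SA)) = 1 := by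
    calc SA * (M₁⁻¹ * SB⁻¹) * (SB⁻¹ * (M₁⁻¹ * SA))
        = SA * (M₁⁻¹ * (SB⁻¹ * SB⁻¹ * M₁⁻¹) * SA) := by simp only [Matrix.mul_assoc]
      _ = SA * ((SA * SA)⁻¹ * SA) := by rw [hSinv]
      _ = 1 := by
          rw [Matrix.mul_inv_rev]
          simp only [Matrix.mul_assoc]
          rw [nonsing_inv_mul _ hSAdet, mul_one, mul_nonsing_inv _ hSAdet]
  have horth : (M₃ * M₂ * M₁)ᵀ * (M₃ * M₂ * M₁) = 1 := by
    rw [hPT, hP]; exact hkey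
  have horth2 : (M₃ * M₂ * M₁) * (M₃ * M₂ * M₁)ᵀ = 1 := mul_eq_one_comm.mp horth
  have hdetpos : 0 < (M₃ * M₂ * M₁).det := by
    rw [det_mul, det_mul]
    exact mul_pos (mul_pos hM3.det_pos hM2.det_pos) hM1.det_pos
  have hdetsq : (M₃ * M₂ * M₁).det * (M₃ * M₂ * M₁).det = 1 := by
    have := congrArg Matrix.det horth
    rwa [det_mul, det_transpose, det_one] at this
  have hdet1 : (M₃ * M₂ * M₁).det = 1 := by nlinarith
  exact ⟨hM1, hM2, hM3, horth, horth2, hdet1⟩
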